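/- Let B : ℝⁿ → ℝ be continuously differentiable and let x : [0,∞) → ℝⁿ be differentiable with B(x(0)) ≤ 0. If for every t ≥ 0, B(x(t)) = 0 implies d/dt B(x(t)) < 0, then B(x(t)) ≤ 0 for all t ≥ 0. -/

import Mathlib

open Filter Topology

lemma aux_eventually_lt {g : ℝ → ℝ} {s : ℝ} (hd : DifferentiableAt ℝ g s)
    (hneg : deriv g s < 0) : ∀ᶠ t in 𝓝[>] s, g t < g s := by
  have h : Filter.Tendsto (slope g s) (𝓝[≠] s) (𝓝 (deriv g s)) :=
    hasDerivAt_iff_tendsto_slope.1 hd.hasDerivAt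
  have hev : ∀ᶠ t in 𝓝[≠] s, slope g s t < 0 := h.eventually (gt_mem_nhds hneg)
  have hev' : ∀ᶠ t in 𝓝[>] s, slope g s t < 0 :=
    hev.filter_mono (nhdsWithin_mono _ (fun t ht => ne_of_gt ht))
  filter_upwards [hev', self_mem_nhdsWithin] with t hslope (hts : s < t)
  have : (g t - g s) / (t - s) < 0 := by simpa [slope_def_field, div_eq_inv_mul] using hslope
  have := (div_neg_iff.1 this)
  rcases this with ⟨h1, h2⟩ | ⟨h1, h2⟩
  · linarith
  · linarith [sub_pos.2 hts]

/-- Key analytic lemma: a `C¹` scalar quantity along a differentiable trajectory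
that is strictly decreasing whenever it hits zero, and starts nonpositive,
stays nonpositive forever. -/
theorem stmt_1 {n : ℕ}
    (B : EuclideanSpace ℝ (Fin n) → ℝ)
    (hB : ContDiff ℝ 1 B)
    (x : ℝ → EuclideanSpace ℝ (Fin n))
    (hx : Differentiable ℝ x)
    (h0 : B (x 0) ≤ 0)
    (hdec : ∀ t ≥ (0 : ℝ), B (x t) = 0 → deriv (fun s => B (x s)) t < 0) :
    ∀ t ≥ (0 : ℝ), B (x t) ≤ 0 := by
  set g : ℝ → ℝ := fun s => B (x s) with hgdef
  have hgdiff : Differentiable ℝ g := (hB.differentiable one_ne_zero).comp hx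
  have hgcont : Continuous g := hgdiff.continuous
  intro T hT
  by_contra hpos
  push_neg at hpos
  set S := Set.Icc (0:ℝ) T ∩ g ⁻¹' Set.Iic 0 with hSdef
  have hS0 : (0:ℝ) ∈ S := ⟨⟨le_rfl, hT⟩, h0⟩
  have hSbdd : BddAbove S := ⟨T, fun t ht => ht.1.2⟩
  set s := sSup S with hs
  have hsS : s ∈ S := by
    have hclosed : IsClosed S := isClosed_Icc.inter (isClosed_Iic.preimage hgcont)
    exact hclosed.closure_subset (csSup_mem_closure ⟨0, hS0⟩ hSbdd)
  have hs0 : 0 ≤ s := hsS.1.1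
  have hgs : g s ≤ 0 := hsS.2
  have hsT : s < T := by
    rcases hsS.1.2.lt_or_eq with h | h
    · exact h
    · exact absurd (h ▸ hgs) (not_le.2 hpos)
  -- in either case, get a point t > s, t ≤ T, with g t ≤ 0, contradicting sSup
  have key : ∀ᶠ t in 𝓝[>] s, g t ≤ 0 := by
    rcases hgs.lt_or_eq with hlt | heq
    · have : ∀ᶠ t in 𝓝 s, g t < 0 := (hgcont.continuousAt).eventually_lt continuous_const.continuousAt hlt
      exact (eventually_nhdsWithin_of_eventually_nhds this).mono fun t ht => ht.le
    · have hderiv : deriv g s < 0 := hdec s hs0 heq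
      exact (aux_eventually_lt (hgdiff s) hderiv).mono fun t ht => by
        rw [← heq]; exact ht.le
  have hIoo : Set.Ioo s T ∈ 𝓝[>] s := Ioo_mem_nhdsGT_of_mem ⟨le_rfl, hsT⟩
  obtain ⟨t, hgt, hts, htT⟩ := (key.and hIoo).exists
  have htS : t ∈ S := ⟨⟨hs0.trans hts.le, htT.le⟩, hgt⟩
  exact absurd (le_csSup hSbdd htS) (not_le.2 hts)
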